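/- Let (C, Δ) be a coassociative coalgebra with coproduct Δ(a_i) = Σ_{j+k=i} a_j ⊗ a_k on basis a₀, ..., a_{n−1} (indices in {0,...,n−1}, sum over ordered pairs (j,k) of such indices with j + k = i), let q ∈ k be invertible, and let x₀, ..., x_{n−1} be a second family of basis vectors of a space E = span(a_i) ⊕ span(x_i). Define δ(a_i) = Σ_{j+k=i} a_j ⊗ a_k, δ(x_i) = Σ_{j+k=i} a_j ⊗ x_k, δ̂(a_i) = Σ_{j+k=i} a_j ⊗ a_k, δ̂(x_i) = Σ_{j+k=i} q^k x_j ⊗ a_k. Then (E, δ, δ̂) is a coassociative codialgebra: δ and δ̂ are coassociative, (id⊗δ̂)δ̂=(id⊗δ)δ̂, (δ⊗id)δ=(δ̂⊗id)δ, and (id⊗δ̂)δ=(δ⊗id)δ̂. -/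

import Mathlib

open TensorProduct

/-- `(f ⊗ id) ∘ g`, rebracketed via the associator. -/
noncomputable def cL {k M : Type*} [Field k] [AddCommGroup M] [Module k M]
    (f g : M →ₗ[k] M ⊗[k] M) : M →ₗ[k] M ⊗[k] (M ⊗[k] M) :=
  (TensorProduct.assoc k M M M).toLinearMap ∘ₗ (TensorProduct.map f LinearMap.id) ∘ₗ g

/-- `(id ⊗ f) ∘ g`. -/
noncomputable def cR {k M : Type*} [Field k] [AddCommGroup M] [Module k M]
    (f g : M →ₗ[k] M ⊗[k] M) : M →ₗ[k] M ⊗[k] (M ⊗[k] M) :=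
  (TensorProduct.map LinearMap.id f) ∘ₗ g

section helpers
variable {M : Type*} [AddCommMonoid M]

lemma ite_sum' {α : Type*} [Fintype α] (c : Prop) [Decidable c] (f : α → M) :
    (if c then ∑ y : α, f y else 0) = ∑ y : α, if c then f y else 0 := by
  split <;> simp

lemma collapse (n : ℕ) (i p2 r1 r2 : Fin n) (v : M) :
    (∑ p1 : Fin n, if ((p1:ℕ)+(p2:ℕ)=(i:ℕ) ∧ (r1:ℕ)+(r2:ℕ)=(p1:ℕ)) then v else 0)
      = if (r1:ℕ)+(r2:ℕ)+(p2:ℕ)=(i:ℕ) then v else 0 := by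
  by_cases h : (r1:ℕ)+(r2:ℕ)+(p2:ℕ)=(i:ℕ)
  · have hlt : (r1:ℕ)+(r2:ℕ) < n := by have := i.isLt; omega
    rw [Finset.sum_eq_single (⟨(r1:ℕ)+(r2:ℕ), hlt⟩ : Fin n)]
    · rw [if_pos ⟨h, rfl⟩, if_pos h]
    · intro c _ hc
      rw [if_neg]
      rintro ⟨h1, h2⟩
      exact hc (Fin.ext h2.symm)
    · simp
  · rw [if_neg h]
    apply Finset.sum_eq_zero
    intro p1 _
    rw [if_neg]
    rintro ⟨h1, h2⟩
    omega

lemma collapse2 (n : ℕ) (i p1 r1 r2 : Fin n) (v : M) :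
    (∑ p2 : Fin n, if ((p1:ℕ)+(p2:ℕ)=(i:ℕ) ∧ (r1:ℕ)+(r2:ℕ)=(p2:ℕ)) then v else 0)
      = if (p1:ℕ)+(r1:ℕ)+(r2:ℕ)=(i:ℕ) then v else 0 := by
  by_cases h : (p1:ℕ)+(r1:ℕ)+(r2:ℕ)=(i:ℕ)
  · have hlt : (r1:ℕ)+(r2:ℕ) < n := by have := i.isLt; omega
    rw [Finset.sum_eq_single (⟨(r1:ℕ)+(r2:ℕ), hlt⟩ : Fin n)]
    · rw [if_pos ⟨show (p1:ℕ)+((r1:ℕ)+(r2:ℕ))=(i:ℕ) by omega, rfl⟩, if_pos h]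
    · intro c _ hc
      rw [if_neg]
      rintro ⟨h1, h2⟩
      exact hc (Fin.ext h2.symm)
    · simp
  · rw [if_neg h]
    apply Finset.sum_eq_zero
    intro p2 _
    rw [if_neg]
    rintro ⟨h1, h2⟩
    omega

lemma sumL (n : ℕ) (i : Fin n) (F : Fin n → Fin n → Fin n → M) :
    (∑ p : Fin n × Fin n, ∑ r : Fin n × Fin n, if (p.1:ℕ)+(p.2:ℕ)=(i:ℕ)
        then (if (r.1:ℕ)+(r.2:ℕ)=(p.1:ℕ) then F r.1 r.2 p.2 else 0) else 0)
      = ∑ t : Fin n × Fin n × Fin n,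
          if (t.1:ℕ)+(t.2.1:ℕ)+(t.2.2:ℕ)=(i:ℕ) then F t.1 t.2.1 t.2.2 else 0 := by
  simp only [← ite_and]
  have hR : (∑ t : Fin n × Fin n × Fin n,
        if (t.1:ℕ)+(t.2.1:ℕ)+(t.2.2:ℕ)=(i:ℕ) then F t.1 t.2.1 t.2.2 else 0)
      = ∑ t : Fin n × Fin n × Fin n, ∑ p1 : Fin n,
          if ((p1:ℕ)+(t.2.2:ℕ)=(i:ℕ) ∧ (t.1:ℕ)+(t.2.1:ℕ)=(p1:ℕ))
          then F t.1 t.2.1 t.2.2 else 0 :=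
    Finset.sum_congr rfl fun t _ => (collapse n i t.2.2 t.1 t.2.1 _).symm
  rw [hR, ← Fintype.sum_prod_type', ← Fintype.sum_prod_type']
  exact (Fintype.sum_equiv
    (⟨fun w => ((w.2, w.1.2.2), (w.1.1, w.1.2.1)),
      fun z => ((z.2.1, z.2.2, z.1.2), z.1.1), fun w => rfl, fun z => rfl⟩ :
      ((Fin n × Fin n × Fin n) × Fin n) ≃ ((Fin n × Fin n) × (Fin n × Fin n)))
    (fun w => if ((w.2:ℕ)+(w.1.2.2:ℕ)=(i:ℕ) ∧ (w.1.1:ℕ)+(w.1.2.1:ℕ)=(w.2:ℕ))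
      then F w.1.1 w.1.2.1 w.1.2.2 else 0)
    (fun z => if ((z.1.1:ℕ)+(z.1.2:ℕ)=(i:ℕ) ∧ (z.2.1:ℕ)+(z.2.2:ℕ)=(z.1.1:ℕ))
      then F z.2.1 z.2.2 z.1.2 else 0)
    (fun w => rfl)).symm

lemma sumR (n : ℕ) (i : Fin n) (F : Fin n → Fin n → Fin n → M) :
    (∑ p : Fin n × Fin n, ∑ r : Fin n × Fin n, if (p.1:ℕ)+(p.2:ℕ)=(i:ℕ)
        then (if (r.1:ℕ)+(r.2:ℕ)=(p.2:ℕ) then F p.1 r.1 r.2 else 0) else 0)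
      = ∑ t : Fin n × Fin n × Fin n,
          if (t.1:ℕ)+(t.2.1:ℕ)+(t.2.2:ℕ)=(i:ℕ) then F t.1 t.2.1 t.2.2 else 0 := by
  simp only [← ite_and]
  have hR : (∑ t : Fin n × Fin n × Fin n,
        if (t.1:ℕ)+(t.2.1:ℕ)+(t.2.2:ℕ)=(i:ℕ) then F t.1 t.2.1 t.2.2 else 0)
      = ∑ t : Fin n × Fin n × Fin n, ∑ p2 : Fin n,
          if ((t.1:ℕ)+(p2:ℕ)=(i:ℕ) ∧ (t.2.1:ℕ)+(t.2.2:ℕ)=(p2:ℕ))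
          then F t.1 t.2.1 t.2.2 else 0 :=
    Finset.sum_congr rfl fun t _ => (collapse2 n i t.1 t.2.1 t.2.2 _).symm
  rw [hR, ← Fintype.sum_prod_type', ← Fintype.sum_prod_type']
  exact (Fintype.sum_equiv
    (⟨fun w => ((w.1.1, w.2), (w.1.2.1, w.1.2.2)),
      fun z => ((z.1.1, z.2.1, z.2.2), z.1.2), fun w => rfl, fun z => rfl⟩ :
      ((Fin n × Fin n × Fin n) × Fin n) ≃ ((Fin n × Fin n) × (Fin n × Fin n)))
    (fun w => if ((w.1.1:ℕ)+(w.2:ℕ)=(i:ℕ) ∧ (w.1.2.1:ℕ)+(w.1.2.2:ℕ)=(w.2:ℕ))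
      then F w.1.1 w.1.2.1 w.1.2.2 else 0)
    (fun z => if ((z.1.1:ℕ)+(z.1.2:ℕ)=(i:ℕ) ∧ (z.2.1:ℕ)+(z.2.2:ℕ)=(z.1.2:ℕ))
      then F z.1.1 z.2.1 z.2.2 else 0)
    (fun w => rfl)).symm


variable {k : Type*} [Field k] {N P : Type*} [AddCommGroup N] [Module k N]
  [AddCommGroup P] [Module k P]

lemma lmap_ite (φ : N →ₗ[k] P) (c : Prop) [Decidable c] (y : N) :
    φ (if c then y else 0) = if c then φ y else 0 := by split <;> simp

lemma tmul_ite0 (c : Prop) [Decidable c] (y : N) (z : P) :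
    (y ⊗ₜ[k] if c then z else 0) = if c then y ⊗ₜ[k] z else 0 := by split <;> simp

lemma ite_tmul0 (c : Prop) [Decidable c] (y : N) (z : P) :
    ((if c then y else 0) ⊗ₜ[k] z) = if c then y ⊗ₜ[k] z else 0 := by split <;> simp

lemma inner_substR {M : Type*} [AddCommMonoid M] (n : ℕ) (i : Fin n)
    (f g : Fin n × Fin n → Fin n × Fin n → M)
    (h : ∀ p r : Fin n × Fin n, (r.1:ℕ)+(r.2:ℕ)=(p.2:ℕ) → f p r = g p r) :
    (∑ p : Fin n × Fin n, ∑ r : Fin n × Fin n, if (p.1:ℕ)+(p.2:ℕ)=(i:ℕ)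
        then (if (r.1:ℕ)+(r.2:ℕ)=(p.2:ℕ) then f p r else 0) else 0)
    = ∑ p : Fin n × Fin n, ∑ r : Fin n × Fin n, if (p.1:ℕ)+(p.2:ℕ)=(i:ℕ)
        then (if (r.1:ℕ)+(r.2:ℕ)=(p.2:ℕ) then g p r else 0) else 0 := by
  refine Finset.sum_congr rfl fun p _ => Finset.sum_congr rfl fun r _ => ?_
  by_cases h1 : (p.1:ℕ)+(p.2:ℕ)=(i:ℕ) <;> by_cases h2 : (r.1:ℕ)+(r.2:ℕ)=(p.2:ℕ) <;>
    simp [h1, h2, h p r]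

lemma smul_ite0 (s : k) (c : Prop) [Decidable c] (y : N) :
    (s • if c then y else 0) = if c then s • y else 0 := by split <;> simp

end helpers

/-- On the `2n`-dimensional space `E` with basis
`a₀, …, a_{n−1}, x₀, …, x_{n−1}` and invertible `q ∈ k`, the coproducts
`δ(aᵢ) = Σ_{j+l=i} aⱼ ⊗ a_l`, `δ(xᵢ) = Σ_{j+l=i} aⱼ ⊗ x_l`,
`δ̂(aᵢ) = Σ_{j+l=i} aⱼ ⊗ a_l`, `δ̂(xᵢ) = Σ_{j+l=i} q^l xⱼ ⊗ a_l`
make `(E, δ, δ̂)` a coassociative codialgebra, and `(id ⊗ δ̂)δ = (δ ⊗ id)δ̂`. -/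
theorem cibils_codialgebra {k E : Type*} [Field k] [AddCommGroup E] [Module k E]
    (n : ℕ) (hn : 0 < n) (q : k) (hq : q ≠ 0)
    (a x : Fin n → E)
    (b : Module.Basis (Fin n ⊕ Fin n) k E)
    (hba : ∀ i, b (Sum.inl i) = a i) (hbx : ∀ i, b (Sum.inr i) = x i)
    (δ δh : E →ₗ[k] E ⊗[k] E)
    (hδa : ∀ i : Fin n, δ (a i)
      = ∑ p : Fin n × Fin n,
          if (p.1 : ℕ) + (p.2 : ℕ) = (i : ℕ) then a p.1 ⊗ₜ[k] a p.2 else 0)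
    (hδx : ∀ i : Fin n, δ (x i)
      = ∑ p : Fin n × Fin n,
          if (p.1 : ℕ) + (p.2 : ℕ) = (i : ℕ) then a p.1 ⊗ₜ[k] x p.2 else 0)
    (hδha : ∀ i : Fin n, δh (a i)
      = ∑ p : Fin n × Fin n,
          if (p.1 : ℕ) + (p.2 : ℕ) = (i : ℕ) then a p.1 ⊗ₜ[k] a p.2 else 0)
    (hδhx : ∀ i : Fin n, δh (x i)
      = ∑ p : Fin n × Fin n,
          if (p.1 : ℕ) + (p.2 : ℕ) = (i : ℕ)
          then q ^ (p.2 : ℕ) • (x p.1 ⊗ₜ[k] a p.2) else 0) :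
    -- δ and δ̂ are coassociative
    cL δ δ = cR δ δ ∧ cL δh δh = cR δh δh ∧
    -- (id ⊗ δ̂)δ̂ = (id ⊗ δ)δ̂
    cR δh δh = cR δ δh ∧
    -- (δ ⊗ id)δ = (δ̂ ⊗ id)δ
    cL δ δ = cL δh δ ∧
    -- (id ⊗ δ̂)δ = (δ ⊗ id)δ̂
    cR δh δ = cL δ δh := by
  have key : ∀ (f g : E →ₗ[k] E ⊗[k] E) (v : E), cL f g v
      = (TensorProduct.assoc k E E E) ((TensorProduct.map f LinearMap.id) (g v)) := fun _ _ _ => rfl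
  have keyR : ∀ (f g : E →ₗ[k] E ⊗[k] E) (v : E), cR f g v
      = (TensorProduct.map LinearMap.id f) (g v) := fun _ _ _ => rfl
  refine ⟨?_, ?_, ?_, ?_, ?_⟩
  · -- cL δ δ = cR δ δ
    apply b.ext
    rintro (i | i)
    · rw [hba, key, keyR, hδa i, map_sum, map_sum]
      simp only [lmap_ite, TensorProduct.map_tmul, LinearMap.id_coe, id_eq, hδa, hδx, hδha, hδhx,
        TensorProduct.sum_tmul, TensorProduct.tmul_sum, ite_tmul0, tmul_ite0, ite_sum',
        map_sum, map_zero, map_smul, apply_ite, TensorProduct.tmul_zero,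
        TensorProduct.zero_tmul, smul_zero, smul_ite0, ← TensorProduct.smul_tmul',
        TensorProduct.tmul_smul, Finset.smul_sum, smul_smul, TensorProduct.assoc_tmul]
      rw [sumL n i (fun r s l => a r ⊗ₜ[k] (a s ⊗ₜ[k] a l)),
        sumR n i (fun r s l => a r ⊗ₜ[k] (a s ⊗ₜ[k] a l))]
    · rw [hbx, key, keyR, hδx i, map_sum, map_sum]
      simp only [lmap_ite, TensorProduct.map_tmul, LinearMap.id_coe, id_eq, hδa, hδx, hδha, hδhx,
        TensorProduct.sum_tmul, TensorProduct.tmul_sum, ite_tmul0, tmul_ite0, ite_sum',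
        map_sum, map_zero, map_smul, apply_ite, TensorProduct.tmul_zero,
        TensorProduct.zero_tmul, smul_zero, smul_ite0, ← TensorProduct.smul_tmul',
        TensorProduct.tmul_smul, Finset.smul_sum, smul_smul, TensorProduct.assoc_tmul]
      rw [sumL n i (fun r s l => a r ⊗ₜ[k] (a s ⊗ₜ[k] x l)),
        sumR n i (fun r s l => a r ⊗ₜ[k] (a s ⊗ₜ[k] x l))]
  · -- cL δh δh = cR δh δh
    apply b.ext
    rintro (i | i)
    · rw [hba, key, keyR, hδha i, map_sum, map_sum]
      simp only [lmap_ite, TensorProduct.map_tmul, LinearMap.id_coe, id_eq, hδa, hδx, hδha, hδhx,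
        TensorProduct.sum_tmul, TensorProduct.tmul_sum, ite_tmul0, tmul_ite0, ite_sum',
        map_sum, map_zero, map_smul, apply_ite, TensorProduct.tmul_zero,
        TensorProduct.zero_tmul, smul_zero, smul_ite0, ← TensorProduct.smul_tmul',
        TensorProduct.tmul_smul, Finset.smul_sum, smul_smul, TensorProduct.assoc_tmul]
      rw [sumL n i (fun r s l => a r ⊗ₜ[k] (a s ⊗ₜ[k] a l)),
        sumR n i (fun r s l => a r ⊗ₜ[k] (a s ⊗ₜ[k] a l))]
    · rw [hbx, key, keyR, hδhx i, map_sum, map_sum]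
      simp only [lmap_ite, TensorProduct.map_tmul, LinearMap.id_coe, id_eq, hδa, hδx, hδha, hδhx,
        TensorProduct.sum_tmul, TensorProduct.tmul_sum, ite_tmul0, tmul_ite0, ite_sum',
        map_sum, map_zero, map_smul, apply_ite, TensorProduct.tmul_zero,
        TensorProduct.zero_tmul, smul_zero, smul_ite0, ← TensorProduct.smul_tmul',
        TensorProduct.tmul_smul, Finset.smul_sum, smul_smul, TensorProduct.assoc_tmul]
      rw [inner_substR n i
        (fun p r => (q ^ (p.2:ℕ)) • (x p.1 ⊗ₜ[k] (a r.1 ⊗ₜ[k] a r.2)))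
        (fun p r => (q ^ ((r.1:ℕ)+(r.2:ℕ))) • (x p.1 ⊗ₜ[k] (a r.1 ⊗ₜ[k] a r.2)))
        (fun p r h => by simp only [← h])]
      rw [sumL n i (fun r s l => (q ^ (l:ℕ) * q ^ (s:ℕ)) • (x r ⊗ₜ[k] (a s ⊗ₜ[k] a l))),
        sumR n i (fun r s l => (q ^ ((s:ℕ)+(l:ℕ))) • (x r ⊗ₜ[k] (a s ⊗ₜ[k] a l)))]
      refine Finset.sum_congr rfl fun t _ => ?_
      split <;> simp [← pow_add, Nat.add_comm]
  · -- cR δh δh = cR δ δh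
    apply b.ext
    rintro (i | i)
    · rw [hba, keyR, keyR, hδha i, map_sum, map_sum]
      simp only [lmap_ite, TensorProduct.map_tmul, LinearMap.id_coe, id_eq, hδa, hδx, hδha, hδhx,
        TensorProduct.sum_tmul, TensorProduct.tmul_sum, ite_tmul0, tmul_ite0, ite_sum',
        map_sum, map_zero, map_smul, apply_ite, TensorProduct.tmul_zero,
        TensorProduct.zero_tmul, smul_zero, smul_ite0, ← TensorProduct.smul_tmul',
        TensorProduct.tmul_smul, Finset.smul_sum, smul_smul, TensorProduct.assoc_tmul]
    · rw [hbx, keyR, keyR, hδhx i, map_sum, map_sum]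
      simp only [lmap_ite, TensorProduct.map_tmul, LinearMap.id_coe, id_eq, hδa, hδx, hδha, hδhx,
        TensorProduct.sum_tmul, TensorProduct.tmul_sum, ite_tmul0, tmul_ite0, ite_sum',
        map_sum, map_zero, map_smul, apply_ite, TensorProduct.tmul_zero,
        TensorProduct.zero_tmul, smul_zero, smul_ite0, ← TensorProduct.smul_tmul',
        TensorProduct.tmul_smul, Finset.smul_sum, smul_smul, TensorProduct.assoc_tmul]
  · -- cL δ δ = cL δh δ
    apply b.ext
    rintro (i | i)
    · rw [hba, key, key, hδa i, map_sum, map_sum]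
      simp only [lmap_ite, TensorProduct.map_tmul, LinearMap.id_coe, id_eq, hδa, hδx, hδha, hδhx,
        TensorProduct.sum_tmul, TensorProduct.tmul_sum, ite_tmul0, tmul_ite0, ite_sum',
        map_sum, map_zero, map_smul, apply_ite, TensorProduct.tmul_zero,
        TensorProduct.zero_tmul, smul_zero, smul_ite0, ← TensorProduct.smul_tmul',
        TensorProduct.tmul_smul, Finset.smul_sum, smul_smul, TensorProduct.assoc_tmul]
    · rw [hbx, key, key, hδx i, map_sum, map_sum]
      simp only [lmap_ite, TensorProduct.map_tmul, LinearMap.id_coe, id_eq, hδa, hδx, hδha, hδhx,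
        TensorProduct.sum_tmul, TensorProduct.tmul_sum, ite_tmul0, tmul_ite0, ite_sum',
        map_sum, map_zero, map_smul, apply_ite, TensorProduct.tmul_zero,
        TensorProduct.zero_tmul, smul_zero, smul_ite0, ← TensorProduct.smul_tmul',
        TensorProduct.tmul_smul, Finset.smul_sum, smul_smul, TensorProduct.assoc_tmul]
  · -- cR δh δ = cL δ δh
    apply b.ext
    rintro (i | i)
    · rw [hba, keyR, key, hδa i, hδha i, map_sum, map_sum]
      simp only [lmap_ite, TensorProduct.map_tmul, LinearMap.id_coe, id_eq, hδa, hδx, hδha, hδhx,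
        TensorProduct.sum_tmul, TensorProduct.tmul_sum, ite_tmul0, tmul_ite0, ite_sum',
        map_sum, map_zero, map_smul, apply_ite, TensorProduct.tmul_zero,
        TensorProduct.zero_tmul, smul_zero, smul_ite0, ← TensorProduct.smul_tmul',
        TensorProduct.tmul_smul, Finset.smul_sum, smul_smul, TensorProduct.assoc_tmul]
      rw [sumR n i (fun r s l => a r ⊗ₜ[k] (a s ⊗ₜ[k] a l)),
        sumL n i (fun r s l => a r ⊗ₜ[k] (a s ⊗ₜ[k] a l))]
    · rw [hbx, keyR, key, hδx i, hδhx i, map_sum, map_sum]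
      simp only [lmap_ite, TensorProduct.map_tmul, LinearMap.id_coe, id_eq, hδa, hδx, hδha, hδhx,
        TensorProduct.sum_tmul, TensorProduct.tmul_sum, ite_tmul0, tmul_ite0, ite_sum',
        map_sum, map_zero, map_smul, apply_ite, TensorProduct.tmul_zero,
        TensorProduct.zero_tmul, smul_zero, smul_ite0, ← TensorProduct.smul_tmul',
        TensorProduct.tmul_smul, Finset.smul_sum, smul_smul, TensorProduct.assoc_tmul]
      rw [sumR n i (fun r s l => (q ^ (l:ℕ)) • (a r ⊗ₜ[k] (x s ⊗ₜ[k] a l))),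
        sumL n i (fun r s l => (q ^ (l:ℕ)) • (a r ⊗ₜ[k] (x s ⊗ₜ[k] a l)))]
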